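/- arXiv:2308.01130 — 2 statements merged into one kernel-verified Lean document; each statement's English description precedes it below -/
import Mathlib

section
/- Let R be a finite-dimensional vector space with a nondegenerate symmetric bilinear form η, and for X ∈ End(R) let X^T denote the η-transpose, defined by η(X^T u, v) = η(u, X v). Then an invertible A ∈ GL(R) satisfies (A X A^{-1})^T = A X^T A^{-1} for all X ∈ End(R) if and only if there exists a nonzero scalar λ with η(Au, Av) = λ η(u,v) for all u, v. -/
/-- An endomorphism for which every vector is an eigenvector is a scalar. -/
lemma aux_scalar_of_eigen {R : Type*} [AddCommGroup R] [Module ℝ R]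
    (B : R →ₗ[ℝ] R) (h : ∀ u : R, ∃ c : ℝ, B u = c • u) :
    ∃ c : ℝ, ∀ u : R, B u = c • u := by
  by_cases hs : ∀ u : R, u = 0
  · exact ⟨0, fun u => by rw [hs u]; simp⟩
  push_neg at hs
  obtain ⟨u₀, hu₀⟩ := hs
  obtain ⟨c₀, hc₀⟩ := h u₀
  refine ⟨c₀, fun u => ?_⟩
  rcases eq_or_ne u 0 with rfl | hu
  · simp
  obtain ⟨c, hc⟩ := h u
  obtain ⟨d, hd⟩ := h (u + u₀)
  have h1 : c • u + c₀ • u₀ = d • u + d • u₀ := by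
    rw [← hc, ← hc₀, ← map_add, hd, smul_add]
  have key : (c - d) • u = (d - c₀) • u₀ := by
    have : (c - d) • u = (c • u + c₀ • u₀) - (d • u + c₀ • u₀) := by module
    rw [this, h1]; module
  by_cases hdep : ∃ a : ℝ, u = a • u₀
  · obtain ⟨a, rfl⟩ := hdep
    have ha : a ≠ 0 := by rintro rfl; simp at hu
    have h2 : B (a • u₀) = (a * c₀) • u₀ := by
      rw [map_smul, hc₀, mul_smul]
    have h2' : (a * c₀) • u₀ = (c * a) • u₀ := by rw [← h2, hc, mul_smul]
    have h3 : (a * c₀ - c * a) • u₀ = 0 := by rw [sub_smul, h2', sub_self]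
    rcases smul_eq_zero.mp h3 with hz | hz
    · have h4 : a * c₀ = a * c := by rw [mul_comm a c]; linarith [sub_eq_zero.mp hz]
      have hcc : c = c₀ := (mul_left_cancel₀ ha h4).symm
      rw [hc, hcc]
    · exact absurd hz hu₀
  · push_neg at hdep
    have hcd : c = d := by
      by_contra hne
      have : u = ((c - d)⁻¹ * (d - c₀)) • u₀ := by
        rw [mul_smul, ← key, inv_smul_smul₀ (sub_ne_zero.mpr hne)]
      exact hdep _ this
    have : (d - c₀) • u₀ = 0 := by rw [← key, hcd, sub_self, zero_smul]
    rcases smul_eq_zero.mp this with h | h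
    · have : d = c₀ := by linarith [sub_eq_zero.mp h]
      rw [hc, hcd, this]
    · exact absurd h hu₀

/-- Let `R` be a finite-dimensional real vector space with a nondegenerate
symmetric bilinear form `η`, and let `T X` denote the `η`-transpose of an
endomorphism `X` (so `η(T X u, v) = η(u, X v)`). Then an invertible `A`
commutes with the transpose in the sense `(A X A⁻¹)ᵀ = A Xᵀ A⁻¹` for all `X`
if and only if there is a nonzero scalar `λ` with `η(Au, Av) = λ η(u,v)`. -/
theorem transpose_equivariant_iff_conformal
    (R : Type*) [AddCommGroup R] [Module ℝ R] [FiniteDimensional ℝ R]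
    (η : R →ₗ[ℝ] R →ₗ[ℝ] ℝ)
    (hsymm : ∀ u v : R, η u v = η v u)
    (hnd : ∀ u : R, (∀ v : R, η u v = 0) → u = 0)
    (T : Module.End ℝ R → Module.End ℝ R)
    (hT : ∀ (X : Module.End ℝ R) (u v : R), η (T X u) v = η u (X v))
    (A : R ≃ₗ[ℝ] R) :
    (∀ X : Module.End ℝ R,
        T (A.toLinearMap ∘ₗ X ∘ₗ A.symm.toLinearMap)
          = A.toLinearMap ∘ₗ T X ∘ₗ A.symm.toLinearMap) ↔
      ∃ lam : ℝ, lam ≠ 0 ∧ ∀ u v : R, η (A u) (A v) = lam * η u v := by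
  have ηinj : ∀ x y : R, (∀ v, η x v = η y v) → x = y := by
    intro x y hxy
    have : x - y = 0 := hnd _ (fun v => by
      rw [map_sub, LinearMap.sub_apply, hxy v, sub_self])
    exact sub_eq_zero.mp this
  constructor
  · intro h
    by_cases hs : ∀ u : R, u = 0
    · exact ⟨1, one_ne_zero, fun u v => by rw [hs u, hs v]; simp⟩
    push_neg at hs
    obtain ⟨u₀, hu₀⟩ := hs
    -- the nondegenerate form as an equivalence with the dual
    have hndB : LinearMap.BilinForm.Nondegenerate η :=
      ⟨fun u h => hnd u h, fun u h => hnd u (fun v => by rw [hsymm]; exact h v)⟩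
    set e := LinearMap.BilinForm.toDual η hndB with he
    -- B represents the form (u,v) ↦ η (A u) (A v)
    set B : R →ₗ[ℝ] R :=
      e.symm.toLinearMap ∘ₗ (η.compl₁₂ A.toLinearMap A.toLinearMap) with hBdef
    have hB : ∀ u v : R, η (B u) v = η (A u) (A v) := by
      intro u v
      simp only [hBdef, LinearMap.comp_apply, LinearEquiv.coe_coe]
      rw [he]
      rw [LinearMap.BilinForm.apply_toDual_symm_apply]
      simp [LinearMap.compl₁₂_apply]
    -- T is surjective
    have surjT : ∀ Y : Module.End ℝ R, ∃ X : Module.End ℝ R, T X = Y := by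
      intro Y
      refine ⟨e.symm.toLinearMap ∘ₗ (η.compl₂ Y), ?_⟩
      apply LinearMap.ext
      intro u
      apply ηinj
      intro v
      rw [hT]
      simp only [LinearMap.comp_apply, LinearEquiv.coe_coe]
      rw [hsymm u, he, LinearMap.BilinForm.apply_toDual_symm_apply]
      rw [LinearMap.compl₂_apply, hsymm v]
    -- B commutes with every T X
    have commT : ∀ X : Module.End ℝ R, ∀ a : R, B (T X a) = T X (B a) := by
      intro X a
      apply ηinj
      intro b
      rw [hB]
      have h1 := hT (A.toLinearMap ∘ₗ X ∘ₗ A.symm.toLinearMap) (A a) (A b)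
      rw [h X] at h1
      simp only [LinearMap.comp_apply, LinearEquiv.coe_coe,
        LinearEquiv.symm_apply_apply] at h1
      rw [h1, ← hB, hT]
    have comm : ∀ Y : Module.End ℝ R, ∀ a : R, B (Y a) = Y (B a) := by
      intro Y a
      obtain ⟨X, hX⟩ := surjT Y
      rw [← hX]; exact commT X a
    -- every vector is an eigenvector of B
    have eigen : ∀ u : R, ∃ c : ℝ, B u = c • u := by
      intro u
      rcases eq_or_ne u 0 with rfl | hu
      · exact ⟨0, by simp⟩
      have : ∃ w, η u w ≠ 0 := by
        by_contra hcon
        push_neg at hcon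
        exact hu (hnd u hcon)
      obtain ⟨w, hw⟩ := this
      set Y : Module.End ℝ R := (η.flip w).smulRight u with hY
      have hYapp : ∀ v, Y v = η v w • u := fun v => rfl
      have := comm Y u
      rw [hYapp, hYapp, map_smul] at this
      refine ⟨(η u w)⁻¹ * η (B u) w, ?_⟩
      rw [mul_smul, ← this, inv_smul_smul₀ hw]
    obtain ⟨c, hc⟩ := aux_scalar_of_eigen B eigen
    have hval : ∀ u v : R, η (A u) (A v) = c * η u v := by
      intro u v
      rw [← hB, hc, map_smul, LinearMap.smul_apply, smul_eq_mul]
    refine ⟨c, ?_, hval⟩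
    -- c ≠ 0
    intro hc0
    have hAu₀ : A u₀ ≠ 0 := by
      intro h0
      exact hu₀ (by simpa using congrArg A.symm h0)
    have : ∃ w', η (A u₀) w' ≠ 0 := by
      by_contra hcon
      push_neg at hcon
      exact hAu₀ (hnd _ hcon)
    obtain ⟨w', hw'⟩ := this
    have := hval u₀ (A.symm w')
    rw [A.apply_symm_apply, hc0, zero_mul] at this
    exact hw' this
  · rintro ⟨lam, _, hlam⟩ X
    apply LinearMap.ext
    intro u
    apply ηinj
    intro v
    rw [hT]
    simp only [LinearMap.comp_apply, LinearEquiv.coe_coe]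
    have hv : v = A (A.symm v) := (A.apply_symm_apply v).symm
    calc η u (A (X (A.symm v)))
        = η (A (A.symm u)) (A (X (A.symm v))) := by rw [A.apply_symm_apply]
      _ = lam * η (A.symm u) (X (A.symm v)) := hlam _ _
      _ = lam * η (T X (A.symm u)) (A.symm v) := by rw [hT]
      _ = η (A (T X (A.symm u))) (A (A.symm v)) := (hlam _ _).symm
      _ = η (A (T X (A.symm u))) v := by rw [A.apply_symm_apply]
end

section
/- Let V be a 7-dimensional real vector space. Define a bracket on 𝔰 = ℝ ⊕ Λ³V^* ⊕ Λ⁶V^* by [(c₀,c₃,c₆),(c₀',c₃',c₆')] = (0, c₀c₃' − c₀'c₃, 2c₀c₆' − 2c₀'c₆ − c₃ ∧ c₃'). This bracket is antisymmetric and satisfies the Jacobi identity, so 𝔰 is a Lie algebra. -/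
set_option maxHeartbeats 1000000

open ExteriorAlgebra

private lemma aux_mul_ι {W : Type*} [AddCommGroup W] [Module ℝ W]
    {n : ℕ} {x : ExteriorAlgebra ℝ W} (hx : x ∈ ⋀[ℝ]^n W) (m : W) :
    x * ι ℝ m = ((-1 : ℝ)^n) • (ι ℝ m * x) := by
  induction hx using Submodule.pow_induction_on_left' with
  | algebraMap r => simp [Algebra.commutes]
  | add x y i hx hy ihx ihy => simp [add_mul, mul_add, ihx, ihy]
  | mem_mul a ha i x hx ih =>
    obtain ⟨b, rfl⟩ := ha
    have hswap : ι ℝ b * ι ℝ m = -(ι ℝ m * ι ℝ b) := by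
      have := ExteriorAlgebra.ι_add_mul_swap (R := ℝ) b m
      linear_combination (norm := noncomm_ring) this
    rw [mul_assoc, ih, mul_smul_comm, ← mul_assoc, hswap, pow_succ]
    simp [mul_assoc, smul_smul, mul_comm]

private lemma aux_comm {W : Type*} [AddCommGroup W] [Module ℝ W]
    {p q : ℕ} {x y : ExteriorAlgebra ℝ W} (hx : x ∈ ⋀[ℝ]^p W)
    (hy : y ∈ ⋀[ℝ]^q W) :
    x * y = ((-1 : ℝ)^(p*q)) • (y * x) := by
  induction hy using Submodule.pow_induction_on_left' with
  | algebraMap r => simp [Algebra.commutes]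
  | add a b i ha hb iha ihb => simp [mul_add, add_mul, iha, ihb]
  | mem_mul a ha i z hz ih =>
    obtain ⟨b, rfl⟩ := ha
    rw [← mul_assoc, aux_mul_ι hx b, smul_mul_assoc, mul_assoc, ih,
      mul_smul_comm, smul_smul, mul_assoc]
    rw [Nat.succ_eq_add_one, Nat.mul_add, mul_one, pow_add, mul_comm]

private lemma aux_comm33 {W : Type*} [AddCommGroup W] [Module ℝ W]
    {x y : ExteriorAlgebra ℝ W} (hx : x ∈ ⋀[ℝ]^3 W)
    (hy : y ∈ ⋀[ℝ]^3 W) : x * y = -(y * x) := by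
  have := aux_comm hx hy
  norm_num at this
  simpa using this

/-- The hemisemidirect-type bracket on `𝔰 = ℝ ⊕ Λ³V* ⊕ Λ⁶V*`:
`[(c₀,c₃,c₆),(c₀',c₃',c₆')] = (0, c₀c₃' - c₀'c₃, 2c₀c₆' - 2c₀'c₆ - c₃ ∧ c₃')`.
Forms of degree `k` are modelled as elements of the `k`-th exterior power
`⋀[ℝ]^k V*` inside the exterior algebra of `V* = Module.Dual ℝ V`, with the
wedge product given by the exterior algebra multiplication. -/
noncomputable def sBracket (V : Type*) [AddCommGroup V] [Module ℝ V] :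
    (ℝ × ExteriorAlgebra ℝ (Module.Dual ℝ V) × ExteriorAlgebra ℝ (Module.Dual ℝ V)) →
    (ℝ × ExteriorAlgebra ℝ (Module.Dual ℝ V) × ExteriorAlgebra ℝ (Module.Dual ℝ V)) →
    (ℝ × ExteriorAlgebra ℝ (Module.Dual ℝ V) × ExteriorAlgebra ℝ (Module.Dual ℝ V)) :=
  fun u v =>
    (0, u.1 • v.2.1 - v.1 • u.2.1,
     (2 * u.1) • v.2.2 - (2 * v.1) • u.2.2 - u.2.1 * v.2.1)

/-- For a 7-dimensional real vector space `V`, the bracket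
`[(c₀,c₃,c₆),(c₀',c₃',c₆')] = (0, c₀c₃' - c₀'c₃, 2c₀c₆' - 2c₀'c₆ - c₃ ∧ c₃')`
on `𝔰 = ℝ ⊕ Λ³V* ⊕ Λ⁶V*` is antisymmetric and satisfies the Jacobi identity,
so `𝔰` is a Lie algebra.  (Elements of `𝔰` are triples whose second and third
components lie in the graded pieces `⋀[ℝ]^3 V*` and `⋀[ℝ]^6 V*`.) -/
theorem sBracket_antisymm_and_jacobi
    (V : Type*) [AddCommGroup V] [Module ℝ V] [FiniteDimensional ℝ V]
    (hdim : Module.finrank ℝ V = 7)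
    (S : Set (ℝ × ExteriorAlgebra ℝ (Module.Dual ℝ V) ×
              ExteriorAlgebra ℝ (Module.Dual ℝ V)))
    (hS : S = {u | u.2.1 ∈ ⋀[ℝ]^3 (Module.Dual ℝ V) ∧
                   u.2.2 ∈ ⋀[ℝ]^6 (Module.Dual ℝ V)}) :
    -- the bracket is closed on 𝔰
    (∀ u ∈ S, ∀ v ∈ S, sBracket V u v ∈ S) ∧
    -- antisymmetry
    (∀ u ∈ S, ∀ v ∈ S, sBracket V u v = -sBracket V v u) ∧
    -- Jacobi identity
    (∀ u ∈ S, ∀ v ∈ S, ∀ w ∈ S,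
      sBracket V (sBracket V u v) w + sBracket V (sBracket V v w) u +
        sBracket V (sBracket V w u) v = 0) := by
  subst hS
  refine ⟨?_, ?_, ?_⟩
  · rintro u ⟨hu3, hu6⟩ v ⟨hv3, hv6⟩
    refine ⟨sub_mem (Submodule.smul_mem _ _ hv3) (Submodule.smul_mem _ _ hu3), ?_⟩
    refine sub_mem (sub_mem (Submodule.smul_mem _ _ hv6) (Submodule.smul_mem _ _ hu6)) ?_
    have : u.2.1 * v.2.1 ∈ ⋀[ℝ]^(3+3) (Module.Dual ℝ V) :=
      SetLike.mul_mem_graded hu3 hv3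
    exact this
  · rintro ⟨u0, u3, u6⟩ ⟨hu3, hu6⟩ ⟨v0, v3, v6⟩ ⟨hv3, hv6⟩
    have h := aux_comm33 hu3 hv3
    refine Prod.ext (by simp [sBracket]) (Prod.ext ?_ ?_) <;>
      simp only [sBracket, h, Prod.fst_neg, Prod.snd_neg, neg_sub, neg_neg, sub_neg_eq_add] <;>
      module
  · rintro ⟨u0, u3, u6⟩ ⟨hu3, hu6⟩ ⟨v0, v3, v6⟩ ⟨hv3, hv6⟩ ⟨w0, w3, w6⟩ ⟨hw3, hw6⟩
    have h1 : v3 * u3 = -(u3 * v3) := aux_comm33 hv3 hu3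
    have h2 : w3 * u3 = -(u3 * w3) := aux_comm33 hw3 hu3
    have h3 : w3 * v3 = -(v3 * w3) := aux_comm33 hw3 hv3
    refine Prod.ext (by simp [sBracket]) (Prod.ext ?_ ?_) <;>
      simp only [sBracket, sub_mul, smul_mul_assoc, h1, h2, h3,
        Prod.fst_add, Prod.snd_add, zero_smul, smul_neg, mul_zero, zero_mul,
        Prod.fst_zero, Prod.snd_zero, smul_sub] <;>
      module
end
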